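/- For sequences {μ_n}, {ν_n} of Borel probability measures on ℝ^d, the following are equivalent: (1) |∫ f dμ_n − ∫ f dν_n| → 0 as n → ∞ for every f ∈ Lip(ℝ^d); (2) ‖μ_n − ν_n‖_BL → 0 as n → ∞. -/

import Mathlib

open MeasureTheory Filter NNReal

namespace Stmt3Aux

variable {d : ℕ}

local notation "E" => EuclideanSpace ℝ (Fin d)

/-- bounded continuous functions are integrable against finite measures -/
lemma integ (m : Measure E) [IsFiniteMeasure m] {f : E → ℝ} {C : ℝ}
    (hc : Continuous f) (hb : ∀ x, |f x| ≤ C) : Integrable f m :=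
  (integrable_const C).mono' hc.aestronglyMeasurable
    (Filter.Eventually.of_forall fun x => by simpa [Real.norm_eq_abs] using hb x)

lemma abs_integral_le (m : Measure E) [IsProbabilityMeasure m] {f : E → ℝ} {C : ℝ}
    (hb : ∀ x, |f x| ≤ C) : |∫ x, f x ∂m| ≤ C := by
  have := norm_integral_le_of_norm_le_const (μ := m) (f := f) (C := C)
    (Filter.Eventually.of_forall fun x => by simpa [Real.norm_eq_abs] using hb x)
  simpa [Real.norm_eq_abs] using this

lemma abs_integral_le_tail (m : Measure E) [IsFiniteMeasure m] {g : E → ℝ} {S C : ℝ}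
    (hc : Continuous g) (hb : ∀ x, |g x| ≤ C) (hC : 0 ≤ C) (h0 : ∀ x, ‖x‖ ≤ S → g x = 0) :
    |∫ x, g x ∂m| ≤ C * (m {x | S < ‖x‖}).toReal := by
  have hmeas : MeasurableSet {x : E | S < ‖x‖} :=
    (isOpen_lt continuous_const continuous_norm).measurableSet
  have h1 : |∫ x, g x ∂m| ≤ ∫ x, ‖g x‖ ∂m := by
    simpa [Real.norm_eq_abs] using norm_integral_le_integral_norm (f := g) (μ := m)
  have h2 : ∫ x, ‖g x‖ ∂m ≤ ∫ x, Set.indicator {x : E | S < ‖x‖} (fun _ => C) x ∂m := by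
    apply integral_mono (integ m hc hb).norm ((integrable_const C).indicator hmeas)
    intro x
    by_cases hx : S < ‖x‖
    · simpa [Set.indicator_of_mem, hx, Real.norm_eq_abs] using hb x
    · push_neg at hx
      simp [Set.indicator_of_notMem, hx, h0 x hx]
  have h3 : ∫ x, Set.indicator {x : E | S < ‖x‖} (fun _ => C) x ∂m
      = (m {x | S < ‖x‖}).toReal * C := by
    rw [integral_indicator_const (C : ℝ) hmeas]; simp [smul_eq_mul]; exact Or.inl rfl
  rw [mul_comm]
  calc |∫ x, g x ∂m| ≤ _ := h1
    _ ≤ _ := h2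
    _ = _ := h3

/-- tightness of a finite measure on `E` -/
lemma tight (m : Measure E) [IsFiniteMeasure m] {δ : ℝ} (hδ : 0 < δ) (R₀ : ℝ) :
    ∃ R : ℝ, R₀ ≤ R ∧ (m {x | R < ‖x‖}).toReal < δ := by
  have hmeas : ∀ j : ℕ, NullMeasurableSet {x : E | (j:ℝ) < ‖x‖} m :=
    fun j => ((isOpen_lt continuous_const continuous_norm).measurableSet).nullMeasurableSet
  have hanti : Antitone fun j : ℕ => {x : E | (j:ℝ) < ‖x‖} := by
    intro j k hjk x hx
    simp only [Set.mem_setOf_eq] at hx ⊢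
    exact lt_of_le_of_lt (by exact_mod_cast hjk) hx
  have hint : (⋂ j : ℕ, {x : E | (j:ℝ) < ‖x‖}) = ∅ := by
    ext x
    simp only [Set.mem_iInter, Set.mem_setOf_eq, Set.mem_empty_iff_false, iff_false, not_forall,
      not_lt]
    obtain ⟨j, hj⟩ := exists_nat_gt ‖x‖
    exact ⟨j, hj.le⟩
  have htt := tendsto_measure_iInter_atTop hmeas hanti ⟨0, measure_ne_top m _⟩
  rw [hint] at htt
  simp only [measure_empty] at htt
  have hev : ∀ᶠ j : ℕ in atTop, (m {x | (j:ℝ) < ‖x‖}) < ENNReal.ofReal δ :=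
    htt.eventually_lt_const (by simpa using ENNReal.ofReal_pos.2 hδ)
  obtain ⟨j, hj⟩ := hev.exists
  refine ⟨max R₀ j, le_max_left _ _, ?_⟩
  have hsub : {x : E | max R₀ (j:ℝ) < ‖x‖} ⊆ {x | (j:ℝ) < ‖x‖} := by
    intro x hx
    simp only [Set.mem_setOf_eq] at hx ⊢
    exact lt_of_le_of_lt (le_max_right _ _) hx
  have := measure_mono (μ := m) hsub
  have hlt : m {x | max R₀ (j:ℝ) < ‖x‖} < ENNReal.ofReal δ := lt_of_le_of_lt this hj
  rw [ENNReal.lt_ofReal_iff_toReal_lt (measure_ne_top m _)] at hlt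
  exact hlt

lemma tight2 (m₁ m₂ : Measure E) [IsFiniteMeasure m₁] [IsFiniteMeasure m₂] {δ : ℝ}
    (hδ : 0 < δ) (R₀ : ℝ) :
    ∃ R : ℝ, R₀ ≤ R ∧ (m₁ {x | R < ‖x‖}).toReal < δ ∧ (m₂ {x | R < ‖x‖}).toReal < δ := by
  obtain ⟨R₁, hR₁, h₁⟩ := tight m₁ hδ R₀
  obtain ⟨R₂, hR₂, h₂⟩ := tight m₂ hδ R₁
  refine ⟨R₂, hR₁.trans hR₂, ?_, h₂⟩
  refine lt_of_le_of_lt ?_ h₁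
  have hsub : {x : E | R₂ < ‖x‖} ⊆ {x | R₁ < ‖x‖} := by
    intro x hx
    simp only [Set.mem_setOf_eq] at hx ⊢
    exact lt_of_le_of_lt hR₂ hx
  exact ENNReal.toReal_mono (measure_ne_top m₁ _) (measure_mono hsub)


/-- cutoff function: 1 on ball T, 0 outside ball (T+1) -/
noncomputable def cut (T : ℝ) (x : E) : ℝ := max 0 (min 1 (T + 1 - ‖x‖))

lemma cut_lip (T : ℝ) : LipschitzWith 1 (cut (d := d) T) := by
  have h1 : LipschitzWith 1 (fun x : E => T + 1 - ‖x‖) := by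
    apply LipschitzWith.of_dist_le_mul
    intro x y
    rw [Real.dist_eq, dist_eq_norm]
    have := abs_norm_sub_norm_le x y
    rw [show T + 1 - ‖x‖ - (T + 1 - ‖y‖) = -(‖x‖ - ‖y‖) by ring, abs_neg]
    simpa using this
  exact (h1.const_min 1).const_max 0

lemma cut_nonneg (T : ℝ) (x : E) : 0 ≤ cut T x := le_max_left _ _

lemma cut_le_one (T : ℝ) (x : E) : cut T x ≤ 1 := by
  rcases le_total (min 1 (T + 1 - ‖x‖)) 0 with h | h
  · rw [cut, max_eq_left h]; norm_num
  · rw [cut, max_eq_right h]; exact min_le_left _ _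

lemma cut_abs_le_one (T : ℝ) (x : E) : |cut T x| ≤ 1 :=
  abs_le.2 ⟨by linarith [cut_nonneg (d := d) T x], cut_le_one T x⟩

lemma cut_eq_one {T : ℝ} {x : E} (h : ‖x‖ ≤ T) : cut T x = 1 := by
  rw [cut, min_eq_left (by linarith), max_eq_right (by linarith)]

lemma cut_eq_zero {T : ℝ} {x : E} (h : T + 1 ≤ ‖x‖) : cut T x = 0 := by
  rw [cut, max_eq_left]
  exact le_trans (min_le_right _ _) (by linarith)

lemma cut_le (T : ℝ) (x : E) : cut T x ≤ max 0 (T + 1 - ‖x‖) :=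
  max_le_max le_rfl (min_le_right _ _)

lemma cut_cont (T : ℝ) : Continuous (cut (d := d) T) := (cut_lip T).continuous

/-- clip to [-1,1] -/
noncomputable def clip (t : ℝ) : ℝ := max (-1) (min 1 t)

lemma clip_lip : LipschitzWith 1 clip :=
  (LipschitzWith.id.const_min 1).const_max (-1)

lemma clip_abs_le (t : ℝ) : |clip t| ≤ 1 := by
  rw [abs_le]
  constructor
  · exact le_max_left _ _
  · rcases le_total (min 1 t) (-1) with h | h
    · rw [clip, max_eq_left h]; norm_num
    · rw [clip, max_eq_right h]; exact min_le_left _ _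

lemma clip_of_abs_le {t : ℝ} (h : |t| ≤ 1) : clip t = t := by
  rw [abs_le] at h
  rw [clip, min_eq_right h.2, max_eq_right h.1]

lemma clip_near {a b : ℝ} (hb : |b| ≤ 1) : |clip a - b| ≤ |a - b| := by
  conv_lhs => rw [← clip_of_abs_le hb]
  have := clip_lip.dist_le_mul a b
  rw [Real.dist_eq, Real.dist_eq] at this
  simpa using this

/-- product of bounded Lipschitz functions -/
lemma lip_mul {f g : E → ℝ} {Kf Kg : ℝ≥0} (hf : LipschitzWith Kf f) (hg : LipschitzWith Kg g)
    (hfb : ∀ x, |f x| ≤ 1) (hgb : ∀ x, |g x| ≤ 1) :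
    LipschitzWith (Kf + Kg) (fun x => f x * g x) := by
  apply LipschitzWith.of_dist_le_mul
  intro x y
  have h1 := hf.dist_le_mul x y
  have h2 := hg.dist_le_mul x y
  rw [Real.dist_eq] at h1 h2
  rw [Real.dist_eq]
  have key : f x * g x - f y * g y = f x * (g x - g y) + g y * (f x - f y) := by ring
  rw [key]
  push_cast
  calc |f x * (g x - g y) + g y * (f x - f y)|
      ≤ |f x * (g x - g y)| + |g y * (f x - f y)| := abs_add_le _ _
    _ = |f x| * |g x - g y| + |g y| * |f x - f y| := by rw [abs_mul, abs_mul]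
    _ ≤ 1 * ((Kg : ℝ) * dist x y) + 1 * ((Kf : ℝ) * dist x y) := by
        gcongr
        · exact hfb x
        · exact hgb y
    _ = ((Kf : ℝ) + (Kg : ℝ)) * dist x y := by ring

/-- a K-Lipschitz function vanishing on the ball of radius S is bounded by K(‖y‖-S) -/
lemma lip_vanish_bound {f : E → ℝ} {K : ℝ≥0} (hf : LipschitzWith K f) {S : ℝ} (hS : 0 ≤ S)
    (h0 : ∀ x, ‖x‖ ≤ S → f x = 0) (y : E) : |f y| ≤ (K : ℝ) * max 0 (‖y‖ - S) := by
  rcases le_total ‖y‖ S with h | h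
  · rw [h0 y h]
    simp [abs_nonneg]
    positivity
  · have hy : 0 < ‖y‖ ∨ ‖y‖ = 0 := by
      rcases eq_or_lt_of_le (norm_nonneg y) with h' | h'
      · exact Or.inr h'.symm
      · exact Or.inl h'
    rcases hy with hy | hy
    swap
    · have hS0 : S = 0 := le_antisymm (by linarith) hS
      rw [h0 y (by rw [hy, hS0])]
      simp [abs_nonneg]
      positivity
    · set z : E := (S / ‖y‖) • y with hz
      have hzn : ‖z‖ = S := by
        rw [hz, norm_smul, Real.norm_eq_abs, abs_of_nonneg (by positivity)]
        field_simp
      have hfz : f z = 0 := h0 z (le_of_eq hzn)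
      have hyz : ‖y - z‖ = ‖y‖ - S := by
        have hcomb : y - z = (1 - S / ‖y‖) • y := by
          rw [hz, sub_smul, one_smul]
        rw [hcomb, norm_smul, Real.norm_eq_abs]
        rw [abs_of_nonneg (by rw [sub_nonneg]; exact div_le_one_of_le₀ h (norm_nonneg y))]
        field_simp
      have := hf.dist_le_mul y z
      rw [Real.dist_eq, dist_eq_norm, hfz, sub_zero, hyz] at this
      calc |f y| ≤ (K : ℝ) * (‖y‖ - S) := this
        _ ≤ (K : ℝ) * max 0 (‖y‖ - S) := by gcongr; exact le_max_right _ _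


noncomputable def LL (μ ν : ℕ → Measure (EuclideanSpace ℝ (Fin d))) (n : ℕ)
    (f : EuclideanSpace ℝ (Fin d) → ℝ) : ℝ :=
  (∫ x, f x ∂(μ n)) - ∫ x, f x ∂(ν n)

section

variable (μ ν : ℕ → Measure (EuclideanSpace ℝ (Fin d)))

/-- the hypothesis (1) applies, after rescaling, to any bounded Lipschitz function -/
lemma tendsto_LL
    (hyp : ∀ f : E → ℝ, (∀ x, |f x| ≤ 1) → LipschitzWith 1 f →
      Tendsto (fun n => |LL μ ν n f|) atTop (nhds 0))
    {f : E → ℝ} (C : ℝ≥0) (hb : ∀ x, |f x| ≤ 1) (hl : LipschitzWith C f) :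
    Tendsto (fun n => |LL μ ν n f|) atTop (nhds 0) := by
  set c : ℝ := max (C : ℝ) 1 with hc
  have hc1 : (1:ℝ) ≤ c := le_max_right _ _
  have hc0 : (0:ℝ) < c := lt_of_lt_of_le one_pos hc1
  set g : E → ℝ := fun x => c⁻¹ * f x with hg
  have hgb : ∀ x, |g x| ≤ 1 := by
    intro x
    rw [hg]
    simp only [abs_mul, abs_inv, abs_of_pos hc0]
    calc c⁻¹ * |f x| ≤ c⁻¹ * 1 := by gcongr; exact hb x
      _ ≤ 1 := by rw [mul_one]; exact inv_le_one_of_one_le₀ hc1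
  have hgl : LipschitzWith 1 g := by
    apply LipschitzWith.of_dist_le_mul
    intro x y
    have h1 := hl.dist_le_mul x y
    rw [Real.dist_eq] at h1 ⊢
    rw [hg]
    simp only
    rw [← mul_sub, abs_mul, abs_inv, abs_of_pos hc0]
    push_cast
    calc c⁻¹ * |f x - f y| ≤ c⁻¹ * ((C:ℝ) * dist x y) := by gcongr
      _ ≤ 1 * dist x y := by
          rw [← mul_assoc]
          gcongr
          rw [inv_mul_le_iff₀ hc0, mul_one]
          exact le_max_left _ _
  have key : ∀ n, LL μ ν n f = c * LL μ ν n g := by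
    intro n
    have hfg : ∀ x, f x = c * g x := by
      intro x; rw [hg]; field_simp
    unfold LL
    calc (∫ x, f x ∂(μ n)) - ∫ x, f x ∂(ν n)
        = (∫ x, c * g x ∂(μ n)) - ∫ x, c * g x ∂(ν n) := by
          simp_rw [← hfg]
      _ = c * ((∫ x, g x ∂(μ n)) - ∫ x, g x ∂(ν n)) := by
          rw [show (fun x : E => c * g x) = fun x : E => c * (c⁻¹ * f x) from rfl]
          rw [integral_const_mul c (fun x => c⁻¹ * f x), integral_const_mul c (fun x => c⁻¹ * f x)]
          ring
  have h2 := (hyp g hgb hgl).const_mul c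
  rw [mul_zero] at h2
  have : (fun n => |LL μ ν n f|) = fun n => c * |LL μ ν n g| := by
    funext n
    rw [key n, abs_mul, abs_of_pos hc0]
  rw [this]
  exact h2

end

structure St (d : ℕ) where
  n : ℕ
  S : ℝ
  P : EuclideanSpace ℝ (Fin d) → ℝ

def Inv (k : ℕ) (st : St d) : Prop :=
  (k : ℝ) ≤ st.S ∧ (∀ x, |st.P x| ≤ min 1 (6 * max 0 (st.S - ‖x‖))) ∧ LipschitzWith 6 st.P

def Rel (μ ν : ℕ → Measure (EuclideanSpace ℝ (Fin d))) (δ : ℝ) (st st' : St d) : Prop :=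
  st.n < st'.n ∧ st.S + 1 ≤ st'.S ∧ (∀ x, ‖x‖ ≤ st.S → st'.P x = st.P x) ∧
  3*δ/4 ≤ |LL μ ν st'.n st'.P - LL μ ν st'.n st.P| ∧
  |LL μ ν st'.n st.P| ≤ δ/8 ∧
  (μ st'.n {x | st'.S < ‖x‖}).toReal ≤ δ/32 ∧ (ν st'.n {x | st'.S < ‖x‖}).toReal ≤ δ/32


-- the inductive step
lemma step_ex (μ ν : ℕ → Measure (EuclideanSpace ℝ (Fin d)))
    (hμ : ∀ n, IsProbabilityMeasure (μ n)) (hν : ∀ n, IsProbabilityMeasure (ν n))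
    (hyp : ∀ f : E → ℝ, (∀ x, |f x| ≤ 1) → LipschitzWith 1 f →
      Tendsto (fun n => |LL μ ν n f|) atTop (nhds 0))
    {δ : ℝ} (hδ : 0 < δ)
    (hfreq : ∀ R : ℝ, 0 ≤ R → ∃ᶠ n in atTop, ∃ f : E → ℝ, (∀ x, |f x| ≤ 1) ∧
      LipschitzWith 2 f ∧ (∀ x, ‖x‖ ≤ R → f x = 0) ∧ δ < |LL μ ν n f|)
    (k : ℕ) (st : St d) (hst : Inv k st) :
    ∃ st' : St d, Inv (k+1) st' ∧ Rel μ ν δ st st' := by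
  obtain ⟨hkS, hPbd, hPlip⟩ := hst
  have hS0 : (0:ℝ) ≤ st.S := le_trans (Nat.cast_nonneg k) hkS
  have hPb1 : ∀ x, |st.P x| ≤ 1 := fun x => (hPbd x).trans (min_le_left _ _)
  have hPc : Continuous st.P := hPlip.continuous
  have hPz : ∀ x : E, st.S < ‖x‖ → st.P x = 0 := by
    intro x hx
    have h1 : max 0 (st.S - ‖x‖) = 0 := max_eq_left (by linarith)
    have h2 := hPbd x
    rw [h1, mul_zero] at h2
    rw [show min (1:ℝ) 0 = 0 by norm_num] at h2
    exact abs_eq_zero.1 (le_antisymm h2 (abs_nonneg _))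
  have ev1 : ∀ᶠ n in atTop, |LL μ ν n st.P| < δ/8 :=
    (tendsto_LL μ ν hyp 6 hPb1 hPlip).eventually_lt_const (by linarith)
  obtain ⟨n, hn, ⟨⟨f, hfb, hfl, hf0, hfL⟩, hsmall⟩⟩ :=
    frequently_atTop.1 ((hfreq st.S hS0).and_eventually ev1) (st.n + 1)
  haveI := hμ n
  haveI := hν n
  have hfc : Continuous f := hfl.continuous
  obtain ⟨T, hT, hTμ, hTν⟩ := tight2 (μ n) (ν n) (by linarith : (0:ℝ) < δ/32) (max st.S 0)
  have hTS : st.S ≤ T := le_trans (le_max_left _ _) hT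
  have hT0 : (0:ℝ) ≤ T := le_trans (le_max_right _ _) hT
  set f1 : E → ℝ := fun x => f x * cut T x with hf1
  have hf1b : ∀ x, |f1 x| ≤ 1 := by
    intro x
    rw [hf1]
    simp only [abs_mul]
    calc |f x| * |cut T x| ≤ 1 * 1 :=
          mul_le_mul (hfb x) (cut_abs_le_one T x) (abs_nonneg _) zero_le_one
      _ = 1 := one_mul 1
  have hf1l : LipschitzWith 3 f1 := by
    have := lip_mul hfl (cut_lip T) hfb (cut_abs_le_one T)
    have h23 : (2 + 1 : ℝ≥0) = 3 := by norm_num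
    rwa [h23] at this
  have hf1c : Continuous f1 := hf1l.continuous
  have hf10 : ∀ x : E, ‖x‖ ≤ st.S → f1 x = 0 := by
    intro x hx; rw [hf1]; simp only; rw [hf0 x hx, zero_mul]
  -- truncation error
  have hdiffb : ∀ x : E, |f1 x - f x| ≤ 1 := by
    intro x
    rw [hf1]
    simp only
    rw [show f x * cut T x - f x = f x * (cut T x - 1) by ring, abs_mul]
    have habs : |cut T x - 1| ≤ 1 := by
      rw [abs_le]
      constructor
      · linarith [cut_nonneg (d := d) T x]
      · linarith [cut_le_one (d := d) T x]
    calc |f x| * |cut T x - 1| ≤ 1 * 1 :=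
          mul_le_mul (hfb x) habs (abs_nonneg _) zero_le_one
      _ = 1 := one_mul 1
  have hdiff0 : ∀ x : E, ‖x‖ ≤ T → f1 x - f x = 0 := by
    intro x hx
    rw [hf1]
    simp only
    rw [cut_eq_one hx, mul_one, sub_self]
  have hdiffc : Continuous (fun x : E => f1 x - f x) := hf1c.sub hfc
  have htrμ := abs_integral_le_tail (μ n) hdiffc hdiffb zero_le_one hdiff0
  have htrν := abs_integral_le_tail (ν n) hdiffc hdiffb zero_le_one hdiff0
  have hint_f : Integrable f (μ n) := integ _ hfc hfb
  have hint_f' : Integrable f (ν n) := integ _ hfc hfb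
  have hint_f1 : Integrable f1 (μ n) := integ _ hf1c hf1b
  have hint_f1' : Integrable f1 (ν n) := integ _ hf1c hf1b
  have hLLdiff : LL μ ν n f1 - LL μ ν n f = LL μ ν n (fun x => f1 x - f x) := by
    unfold LL
    rw [integral_sub hint_f1 hint_f, integral_sub hint_f1' hint_f']
    ring
  have htr : |LL μ ν n f1 - LL μ ν n f| ≤ δ/16 := by
    rw [hLLdiff]
    unfold LL
    calc |(∫ x, (f1 x - f x) ∂(μ n)) - ∫ x, (f1 x - f x) ∂(ν n)|
        ≤ |∫ x, (f1 x - f x) ∂(μ n)| + |∫ x, (f1 x - f x) ∂(ν n)| := abs_sub _ _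
      _ ≤ 1 * (μ n {x | T < ‖x‖}).toReal + 1 * (ν n {x | T < ‖x‖}).toReal := by
          gcongr
      _ ≤ δ/32 + δ/32 := by rw [one_mul, one_mul]; exact add_le_add hTμ.le hTν.le
      _ = δ/16 := by ring
  have hLLf1 : 3*δ/4 ≤ |LL μ ν n f1| := by
    have h1 : |LL μ ν n f| - |LL μ ν n f1| ≤ |LL μ ν n f - LL μ ν n f1| :=
      abs_sub_abs_le_abs_sub _ _
    rw [abs_sub_comm] at h1
    linarith
  -- choose the new radius
  obtain ⟨S', hS'ge, hS'μ, hS'ν⟩ := tight2 (μ n) (ν n) (by linarith : (0:ℝ) < δ/32)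
    (max (T+1) (max (st.S + 1) ((k:ℝ)+1)))
  have hS'T : T + 1 ≤ S' := le_trans (le_max_left _ _) hS'ge
  have hS'S : st.S + 1 ≤ S' := le_trans (le_trans (le_max_left _ _) (le_max_right _ _)) hS'ge
  have hS'k : (k:ℝ) + 1 ≤ S' := le_trans (le_trans (le_max_right _ _) (le_max_right _ _)) hS'ge
  refine ⟨⟨n, S', fun x => st.P x + f1 x⟩, ⟨?_, ?_, ?_⟩, ?_, ?_, ?_, ?_, ?_, ?_, ?_⟩
  · -- (k+1 : ℝ) ≤ S'
    push_cast
    exact hS'k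
  · -- bound
    intro x
    simp only
    rcases le_or_gt ‖x‖ st.S with hx | hx
    · rw [hf10 x hx, add_zero]
      refine le_trans (hPbd x) ?_
      gcongr
      linarith
    · rw [hPz x hx, zero_add]
      refine le_min (hf1b x) ?_
      have h1 : |f1 x| ≤ cut T x := by
        rw [hf1]
        simp only [abs_mul]
        rw [abs_of_nonneg (cut_nonneg T x)]
        calc |f x| * cut T x ≤ 1 * cut T x :=
              mul_le_mul_of_nonneg_right (hfb x) (cut_nonneg T x)
          _ = cut T x := one_mul _
      calc |f1 x| ≤ cut T x := h1
        _ ≤ max 0 (T + 1 - ‖x‖) := cut_le T x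
        _ ≤ max 0 (S' - ‖x‖) := by gcongr
        _ ≤ 6 * max 0 (S' - ‖x‖) := by nlinarith [le_max_left (0:ℝ) (S' - ‖x‖)]
  · -- Lipschitz 6
    apply LipschitzWith.of_dist_le_mul
    have hmain : ∀ x y : E, ‖x‖ ≤ st.S → st.S < ‖y‖ →
        |st.P x + f1 x - (st.P y + f1 y)| ≤ 6 * dist x y := by
      intro x y hx hy
      rw [hf10 x hx, hPz y hy, add_zero, zero_add]
      have h1 : |st.P x| ≤ 6 * (st.S - ‖x‖) := by
        have := hPbd x
        rw [max_eq_right (by linarith)] at this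
        exact this.trans (min_le_right _ _)
      have h2 : |f1 y| ≤ 2 * (‖y‖ - st.S) := by
        have hfy : |f y| ≤ 2 * max 0 (‖y‖ - st.S) := lip_vanish_bound hfl hS0 hf0 y
        rw [max_eq_right (by linarith)] at hfy
        have : |f1 y| ≤ |f y| := by
          rw [hf1]
          simp only [abs_mul]
          calc |f y| * |cut T y| ≤ |f y| * 1 :=
              mul_le_mul_of_nonneg_left (cut_abs_le_one T y) (abs_nonneg _)
            _ = |f y| := mul_one _
        linarith
      have h3 : ‖y‖ - ‖x‖ ≤ dist x y := by
        rw [dist_eq_norm, ← norm_sub_rev]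
        calc ‖y‖ - ‖x‖ ≤ |‖y‖ - ‖x‖| := le_abs_self _
          _ ≤ ‖y - x‖ := abs_norm_sub_norm_le _ _
      calc |st.P x - f1 y| ≤ |st.P x| + |f1 y| := abs_sub _ _
        _ ≤ 6 * (st.S - ‖x‖) + 2 * (‖y‖ - st.S) := add_le_add h1 h2
        _ ≤ 6 * (‖y‖ - ‖x‖) := by linarith
        _ ≤ 6 * dist x y := by gcongr
    intro x y
    rw [Real.dist_eq]
    push_cast
    rcases le_or_gt ‖x‖ st.S with hx | hx <;> rcases le_or_gt ‖y‖ st.S with hy | hy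
    · rw [hf10 x hx, hf10 y hy, add_zero, add_zero]
      have := hPlip.dist_le_mul x y
      rw [Real.dist_eq] at this
      push_cast at this
      exact this
    · exact hmain x y hx hy
    · rw [abs_sub_comm, dist_comm]
      exact hmain y x hy hx
    · rw [hPz x hx, hPz y hy, zero_add, zero_add]
      have := hf1l.dist_le_mul x y
      rw [Real.dist_eq] at this
      push_cast at this
      calc |f1 x - f1 y| ≤ 3 * dist x y := this
        _ ≤ 6 * dist x y := by gcongr <;> norm_num
  · -- n increasing
    show st.n < n
    omega
  · exact hS'S
  · intro x hx
    show st.P x + f1 x = st.P x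
    rw [hf10 x hx, add_zero]
  · -- main gain
    have hadd : LL μ ν n (fun x => st.P x + f1 x) = LL μ ν n st.P + LL μ ν n f1 := by
      unfold LL
      rw [integral_add (integ _ hPc hPb1) hint_f1, integral_add (integ _ hPc hPb1) hint_f1']
      ring
    show 3*δ/4 ≤ |LL μ ν n (fun x => st.P x + f1 x) - LL μ ν n st.P|
    rw [hadd]
    rw [show LL μ ν n st.P + LL μ ν n f1 - LL μ ν n st.P = LL μ ν n f1 by ring]
    exact hLLf1
  · exact hsmall.le
  · exact hS'μ.le
  · exact hS'ν.le


/-- Step 1: co-tightness of the difference sequence -/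
lemma step1 (μ ν : ℕ → Measure (EuclideanSpace ℝ (Fin d)))
    (hμ : ∀ n, IsProbabilityMeasure (μ n)) (hν : ∀ n, IsProbabilityMeasure (ν n))
    (hyp : ∀ f : E → ℝ, (∀ x, |f x| ≤ 1) → LipschitzWith 1 f →
      Tendsto (fun n => |LL μ ν n f|) atTop (nhds 0))
    {δ : ℝ} (hδ : 0 < δ) :
    ∃ R : ℝ, 0 ≤ R ∧ ∀ᶠ n in atTop, ∀ f : E → ℝ, (∀ x, |f x| ≤ 1) → LipschitzWith 2 f →
      (∀ x, ‖x‖ ≤ R → f x = 0) → |LL μ ν n f| ≤ δ := by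
  by_contra hcon
  push_neg at hcon
  have hfreq : ∀ R : ℝ, 0 ≤ R → ∃ᶠ n in atTop, ∃ f : E → ℝ, (∀ x, |f x| ≤ 1) ∧
      LipschitzWith 2 f ∧ (∀ x, ‖x‖ ≤ R → f x = 0) ∧ δ < |LL μ ν n f| := by
    intro R hR
    have h1 := hcon R hR
    exact h1
  have inv0 : Inv 0 (⟨0, 0, fun _ => 0⟩ : St d) := by
    refine ⟨by norm_num, ?_, ?_⟩
    · intro x
      simp only [abs_zero]
      refine le_min zero_le_one ?_
      positivity
    · exact LipschitzWith.const' (0:ℝ)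
  have key := step_ex μ ν hμ hν hyp hδ hfreq
  choose next hinv hrel using key
  let seq : ∀ k : ℕ, {st : St d // Inv k st} :=
    fun k => Nat.rec ⟨⟨0, 0, fun _ => 0⟩, inv0⟩ (fun k ih => ⟨next k ih.1 ih.2, hinv k ih.1 ih.2⟩) k
  have hR : ∀ k, Rel μ ν δ (seq k).1 (seq (k+1)).1 := fun k => hrel k (seq k).1 (seq k).2
  have hSmono : Monotone fun k => (seq k).1.S :=
    monotone_nat_of_le_succ (fun k => by have := (hR k).2.1; linarith)
  have hSk : ∀ k : ℕ, (k : ℝ) ≤ (seq k).1.S := fun k => (seq k).2.1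
  have hstab : ∀ k m, k ≤ m → ∀ x : E, ‖x‖ ≤ (seq k).1.S → (seq m).1.P x = (seq k).1.P x := by
    intro k m hkm
    induction m, hkm using Nat.le_induction with
    | base => intro x _; rfl
    | succ m hkm ih =>
        intro x hx
        rw [(hR m).2.2.1 x (le_trans hx (hSmono hkm))]
        exact ih x hx
  set F : E → ℝ := fun x => (seq ⌈‖x‖⌉₊).1.P x with hF
  have hxle : ∀ (x : E) (m : ℕ), ⌈‖x‖⌉₊ ≤ m → ‖x‖ ≤ (seq m).1.S := by
    intro x m hm
    calc ‖x‖ ≤ (⌈‖x‖⌉₊ : ℝ) := Nat.le_ceil _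
      _ ≤ (seq ⌈‖x‖⌉₊).1.S := hSk _
      _ ≤ (seq m).1.S := hSmono hm
  have hFP : ∀ (k : ℕ) (x : E), ‖x‖ ≤ (seq k).1.S → F x = (seq k).1.P x := by
    intro k x hx
    have h1 : (seq (max k ⌈‖x‖⌉₊)).1.P x = (seq k).1.P x := hstab k _ (le_max_left _ _) x hx
    have h2 : (seq (max k ⌈‖x‖⌉₊)).1.P x = (seq ⌈‖x‖⌉₊).1.P x :=
      hstab _ _ (le_max_right _ _) x (hxle x _ le_rfl)
    rw [hF]
    simp only
    rw [← h2, h1]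
  have hFb : ∀ x, |F x| ≤ 1 := fun x => le_trans ((seq _).2.2.1 x) (min_le_left _ _)
  have hFlip : LipschitzWith 6 F := by
    apply LipschitzWith.of_dist_le_mul
    intro x y
    have hx : ‖x‖ ≤ (seq (max ⌈‖x‖⌉₊ ⌈‖y‖⌉₊)).1.S := hxle x _ (le_max_left _ _)
    have hy : ‖y‖ ≤ (seq (max ⌈‖x‖⌉₊ ⌈‖y‖⌉₊)).1.S := hxle y _ (le_max_right _ _)
    rw [hFP _ x hx, hFP _ y hy]
    exact (seq (max ⌈‖x‖⌉₊ ⌈‖y‖⌉₊)).2.2.2.dist_le_mul x y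
  have final : ∀ k : ℕ, δ/2 ≤ |LL μ ν (seq (k+1)).1.n F| := by
    intro k
    set n' := (seq (k+1)).1.n with hn'
    haveI := hμ n'
    haveI := hν n'
    have hPb : ∀ x, |(seq (k+1)).1.P x| ≤ 1 :=
      fun x => le_trans ((seq (k+1)).2.2.1 x) (min_le_left _ _)
    have hPc : Continuous (seq (k+1)).1.P := (seq (k+1)).2.2.2.continuous
    have hGb : ∀ x : E, |F x - (seq (k+1)).1.P x| ≤ 2 := by
      intro x
      calc |F x - (seq (k+1)).1.P x| ≤ |F x| + |(seq (k+1)).1.P x| := abs_sub _ _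
        _ ≤ 1 + 1 := add_le_add (hFb x) (hPb x)
        _ = 2 := by norm_num
    have hGc : Continuous fun x : E => F x - (seq (k+1)).1.P x := hFlip.continuous.sub hPc
    have hG0 : ∀ x : E, ‖x‖ ≤ (seq (k+1)).1.S → F x - (seq (k+1)).1.P x = 0 := by
      intro x hx
      rw [hFP (k+1) x hx, sub_self]
    have htailμ := abs_integral_le_tail (μ n') hGc hGb (by norm_num) hG0
    have htailν := abs_integral_le_tail (ν n') hGc hGb (by norm_num) hG0
    have htail : |LL μ ν n' F - LL μ ν n' (seq (k+1)).1.P| ≤ δ/8 := by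
      have hsub : LL μ ν n' F - LL μ ν n' (seq (k+1)).1.P
          = LL μ ν n' (fun x => F x - (seq (k+1)).1.P x) := by
        unfold LL
        rw [integral_sub (integ _ hFlip.continuous hFb) (integ _ hPc hPb),
          integral_sub (integ _ hFlip.continuous hFb) (integ _ hPc hPb)]
        ring
      rw [hsub]
      unfold LL
      calc |(∫ x, (F x - (seq (k+1)).1.P x) ∂(μ n')) - ∫ x, (F x - (seq (k+1)).1.P x) ∂(ν n')|
          ≤ |∫ x, (F x - (seq (k+1)).1.P x) ∂(μ n')|
            + |∫ x, (F x - (seq (k+1)).1.P x) ∂(ν n')| := abs_sub _ _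
        _ ≤ 2 * (μ n' {x | (seq (k+1)).1.S < ‖x‖}).toReal
            + 2 * (ν n' {x | (seq (k+1)).1.S < ‖x‖}).toReal := add_le_add htailμ htailν
        _ ≤ 2 * (δ/32) + 2 * (δ/32) := by
            have h1 := (hR k).2.2.2.2.2.1
            have h2 := (hR k).2.2.2.2.2.2
            gcongr
        _ = δ/8 := by ring
    have hgain := (hR k).2.2.2.1
    have hsmall := (hR k).2.2.2.2.1
    have h1 : |LL μ ν n' (seq (k+1)).1.P| - |LL μ ν n' (seq k).1.P|
        ≤ |LL μ ν n' (seq (k+1)).1.P - LL μ ν n' (seq k).1.P| := abs_sub_abs_le_abs_sub _ _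
    have h2 : |LL μ ν n' (seq (k+1)).1.P| - |LL μ ν n' F|
        ≤ |LL μ ν n' (seq (k+1)).1.P - LL μ ν n' F| := abs_sub_abs_le_abs_sub _ _
    rw [abs_sub_comm] at h2
    -- |LL P'| could be large or the difference could be big; both bounds:
    have h3 : |LL μ ν n' (seq (k+1)).1.P - LL μ ν n' (seq k).1.P|
        ≤ |LL μ ν n' (seq (k+1)).1.P| + |LL μ ν n' (seq k).1.P| := abs_sub _ _
    linarith
  have hmono : StrictMono fun k => (seq (k+1)).1.n :=
    strictMono_nat_of_lt_succ (fun k => (hR (k+1)).1)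
  have ht := (tendsto_LL μ ν hyp 6 hFb hFlip).comp hmono.tendsto_atTop
  have hev := ht.eventually_lt_const (by linarith : (0:ℝ) < δ/2)
  obtain ⟨k, hk⟩ := hev.exists
  exact absurd (final k) (not_le.2 hk)


lemma lip_inf' {ι : Type} [Fintype ι] [Nonempty ι] (w : ι → ℝ) (c : ι → E) :
    LipschitzWith 1 (fun x : E => Finset.univ.inf' Finset.univ_nonempty
      (fun g : ι => w g + dist x (c g))) := by
  have hkey : ∀ x y : E, Finset.univ.inf' Finset.univ_nonempty
      (fun g : ι => w g + dist x (c g)) ≤ Finset.univ.inf' Finset.univ_nonempty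
      (fun g : ι => w g + dist y (c g)) + dist x y := by
    intro x y
    obtain ⟨g₀, _, hg₀⟩ := Finset.exists_mem_eq_inf' Finset.univ_nonempty
      (fun g : ι => w g + dist y (c g))
    rw [hg₀]
    calc Finset.univ.inf' Finset.univ_nonempty (fun g : ι => w g + dist x (c g))
        ≤ w g₀ + dist x (c g₀) := Finset.inf'_le _ (Finset.mem_univ g₀)
      _ ≤ w g₀ + (dist x y + dist y (c g₀)) := by
          gcongr
          exact dist_triangle x y (c g₀)
      _ = w g₀ + dist y (c g₀) + dist x y := by ring
  apply LipschitzWith.of_dist_le_mul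
  intro x y
  rw [Real.dist_eq, NNReal.coe_one, one_mul, abs_le]
  constructor
  · have := hkey y x
    rw [dist_comm y x] at this
    linarith
  · have := hkey x y
    linarith

/-- Step 2: a finite net approximating all cut-off 1-Lipschitz functions -/
lemma net (R : ℝ) {δ : ℝ} (hδ : 0 < δ) :
    ∃ V : Set (E → ℝ), V.Finite ∧
      (∀ h ∈ V, (∀ x, |h x| ≤ 1) ∧ LipschitzWith 2 h) ∧
      ∀ f : E → ℝ, (∀ x, |f x| ≤ 1) → LipschitzWith 1 f →
        ∃ h ∈ V, ∀ x, |f x * cut R x - h x| ≤ 2*δ := by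
  classical
  obtain ⟨t, htfin, htcov⟩ := Metric.totallyBounded_iff.1
    (isCompact_closedBall (0:E) (R+1)).totallyBounded δ hδ
  set G : Finset E := insert 0 htfin.toFinset with hG
  haveI : Nonempty {g // g ∈ G} := ⟨⟨0, Finset.mem_insert_self _ _⟩⟩
  set Q : Set ℝ := (fun k : ℤ => δ * k) '' (Set.Icc ⌊(-1)/δ⌋ ⌊1/δ⌋) with hQ
  have hQfin : Q.Finite := (Set.finite_Icc _ _).image _
  set mk : ({g // g ∈ G} → ℝ) → (E → ℝ) := fun w x =>
    clip (Finset.univ.inf' Finset.univ_nonempty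
      (fun g : {g // g ∈ G} => w g + dist x (g : E))) * cut R x with hmk
  set W : Set ({g // g ∈ G} → ℝ) := {w | ∀ g, w g ∈ Q} with hW
  have hWfin : W.Finite := Set.Finite.pi' (fun _ => hQfin)
  refine ⟨mk '' W, hWfin.image _, ?_, ?_⟩
  · rintro h ⟨w, _, rfl⟩
    constructor
    · intro x
      rw [hmk]
      simp only [abs_mul]
      calc |clip _| * |cut R x| ≤ 1 * 1 :=
            mul_le_mul (clip_abs_le _) (cut_abs_le_one R x) (abs_nonneg _) zero_le_one
        _ = 1 := one_mul 1
    · have hinner : LipschitzWith 1 (fun x : E => clip (Finset.univ.inf' Finset.univ_nonempty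
          (fun g : {g // g ∈ G} => w g + dist x (g : E)))) := by
        have h := clip_lip.comp (lip_inf' w (fun g : {g // g ∈ G} => (g : E)))
        rw [mul_one] at h
        exact h
      have := lip_mul hinner (cut_lip R) (fun x => clip_abs_le _) (cut_abs_le_one R)
      have h11 : (1 + 1 : ℝ≥0) = 2 := by norm_num
      rwa [h11] at this
  · intro f hfb hfl
    set w : {g // g ∈ G} → ℝ := fun g => δ * ⌊f (g : E) / δ⌋ with hw
    have hwW : w ∈ W := by
      intro g
      refine ⟨⌊f (g : E) / δ⌋, ?_, rfl⟩
      simp only [Set.mem_Icc]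
      have hg := abs_le.1 (hfb (g : E))
      constructor
      · exact Int.floor_le_floor (by apply div_le_div_of_nonneg_right _ hδ.le; linarith)
      · exact Int.floor_le_floor (by apply div_le_div_of_nonneg_right _ hδ.le; linarith)
    refine ⟨mk w, ⟨w, hwW, rfl⟩, ?_⟩
    intro x
    rcases le_or_gt (R+1) ‖x‖ with hx | hx
    · rw [hmk]
      simp only
      rw [cut_eq_zero hx, mul_zero, mul_zero, sub_zero, abs_zero]
      positivity
    · have hxball : x ∈ Metric.closedBall (0:E) (R+1) := by
        rw [Metric.mem_closedBall, dist_zero_right]; exact hx.le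
      have hxcov := htcov hxball
      simp only [Set.mem_iUnion, Metric.mem_ball, exists_prop] at hxcov
      obtain ⟨g₀, hg₀t, hg₀d⟩ := hxcov
      set g₀' : {g // g ∈ G} := ⟨g₀, by
        rw [hG]; exact Finset.mem_insert_of_mem (htfin.mem_toFinset.2 hg₀t)⟩ with hg₀'
      have hfloor_le : ∀ u : ℝ, δ * ⌊u/δ⌋ ≤ u := by
        intro u
        calc δ * (⌊u/δ⌋ : ℝ) ≤ δ * (u/δ) :=
              mul_le_mul_of_nonneg_left (Int.floor_le _) hδ.le
          _ = u := by field_simp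
      have hfloor_gt : ∀ u : ℝ, u - δ ≤ δ * ⌊u/δ⌋ := by
        intro u
        have h1 : u/δ - 1 < (⌊u/δ⌋ : ℝ) := Int.sub_one_lt_floor _
        have h2 : δ * (u/δ - 1) ≤ δ * (⌊u/δ⌋ : ℝ) := mul_le_mul_of_nonneg_left h1.le hδ.le
        calc u - δ = δ * (u/δ - 1) := by field_simp
          _ ≤ δ * (⌊u/δ⌋ : ℝ) := h2
      set m := Finset.univ.inf' Finset.univ_nonempty
        (fun g : {g // g ∈ G} => w g + dist x (g : E)) with hm
      have hlow : f x - δ ≤ m := by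
        apply Finset.le_inf'
        intro g _
        have h1 : f (g : E) - δ ≤ w g := hfloor_gt _
        have h2 : f x - f (g : E) ≤ dist x (g : E) := by
          have := hfl.dist_le_mul x (g : E)
          rw [Real.dist_eq, NNReal.coe_one, one_mul] at this
          linarith [le_abs_self (f x - f (g : E)), abs_le.1 this]
        linarith
      have hup : m ≤ f x + 2*δ := by
        have hA : m ≤ w g₀' + dist x (g₀' : E) := Finset.inf'_le _ (Finset.mem_univ g₀')
        have hB : w g₀' ≤ f (g₀' : E) := hfloor_le (f (g₀' : E))
        have hC : f (g₀' : E) - f x ≤ dist x (g₀' : E) := by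
          have := hfl.dist_le_mul (g₀' : E) x
          rw [Real.dist_eq, NNReal.coe_one, one_mul, dist_comm] at this
          linarith [le_abs_self (f (g₀' : E) - f x), abs_le.1 this]
        have hD : dist x (g₀' : E) < δ := hg₀d
        linarith
      have habs : |m - f x| ≤ 2*δ := by
        rw [abs_le]
        constructor <;> linarith
      have hclip : |clip m - f x| ≤ 2*δ := le_trans (clip_near (hfb x)) habs
      rw [hmk]
      simp only
      rw [← hm, ← sub_mul, abs_mul, abs_of_nonneg (cut_nonneg R x)]
      calc |f x - clip m| * cut R x ≤ (2*δ) * 1 := by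
            apply mul_le_mul _ (cut_le_one R x) (cut_nonneg R x) (by linarith)
            rw [abs_sub_comm]
            exact hclip
        _ = 2*δ := mul_one _


lemma one_sub_cut_lip (T : ℝ) : LipschitzWith 1 (fun x : E => 1 - cut T x) := by
  apply LipschitzWith.of_dist_le_mul
  intro x y
  have := (cut_lip (d := d) T).dist_le_mul x y
  rw [Real.dist_eq] at this ⊢
  rw [show (1:ℝ) - cut T x - (1 - cut T y) = -(cut T x - cut T y) by ring, abs_neg]
  exact this


end Stmt3Aux

open MeasureTheory Stmt3Aux Filter NNReal

/-- **Corollary B.4.** For sequences of Borel probability measures on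
`ℝ^d`, convergence `|∫ f dμₙ - ∫ f dνₙ| → 0` for every fixed `f ∈ Lip(ℝ^d)` is
equivalent to `‖μₙ - νₙ‖_BL → 0`, where
`‖μ - ν‖_BL = sup_{f ∈ Lip(ℝ^d)} |∫ f dμ - ∫ f dν|`. -/
theorem stmt3 (d : ℕ)
    (μ ν : ℕ → Measure (EuclideanSpace ℝ (Fin d)))
    (hμ : ∀ n, IsProbabilityMeasure (μ n)) (hν : ∀ n, IsProbabilityMeasure (ν n)) :
    (∀ f : EuclideanSpace ℝ (Fin d) → ℝ, (∀ x, |f x| ≤ 1) → LipschitzWith 1 f →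
      Filter.Tendsto (fun n => |∫ x, f x ∂(μ n) - ∫ x, f x ∂(ν n)|)
        Filter.atTop (nhds 0)) ↔
    Filter.Tendsto (fun n =>
        ⨆ f ∈ {f : EuclideanSpace ℝ (Fin d) → ℝ | (∀ x, |f x| ≤ 1) ∧ LipschitzWith 1 f},
          |∫ x, f x ∂(μ n) - ∫ x, f x ∂(ν n)|)
      Filter.atTop (nhds 0) := by
  set S : Set (EuclideanSpace ℝ (Fin d) → ℝ) :=
    {f | (∀ x, |f x| ≤ 1) ∧ LipschitzWith 1 f} with hS
  constructor
  · -- hard direction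
    intro hyp
    have hyp' : ∀ f : EuclideanSpace ℝ (Fin d) → ℝ, (∀ x, |f x| ≤ 1) → LipschitzWith 1 f →
        Tendsto (fun n => |LL μ ν n f|) atTop (nhds 0) := fun f hb hl => hyp f hb hl
    rw [Metric.tendsto_atTop]
    intro ε hε
    have hδ : (0:ℝ) < ε/7 := by linarith
    obtain ⟨R, hR0, hevfar⟩ := step1 μ ν hμ hν hyp' hδ
    obtain ⟨V, hVfin, hVprop, hVnet⟩ := net R hδ
    have hevV : ∀ᶠ n in atTop, ∀ h ∈ V, |LL μ ν n h| ≤ ε/7 := by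
      rw [eventually_all_finite hVfin]
      intro h hh
      exact ((tendsto_LL μ ν hyp' 2 (hVprop h hh).1 (hVprop h hh).2).eventually_lt_const
        hδ).mono (fun n hn => hn.le)
    obtain ⟨N, hN⟩ := eventually_atTop.1 (hevfar.and hevV)
    refine ⟨N, fun n hn => ?_⟩
    obtain ⟨hfar, hVn⟩ := hN n hn
    haveI := hμ n
    haveI := hν n
    have hkey : ∀ f ∈ S, |LL μ ν n f| ≤ 6 * (ε/7) := by
      rintro f ⟨hfb, hfl⟩
      set fcut : EuclideanSpace ℝ (Fin d) → ℝ := fun x => f x * cut R x with hfcut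
      set ffar : EuclideanSpace ℝ (Fin d) → ℝ := fun x => f x * (1 - cut R x) with hffar
      have hfc : Continuous f := hfl.continuous
      have hfcutb : ∀ x, |fcut x| ≤ 1 := by
        intro x
        rw [hfcut]
        simp only [abs_mul]
        calc |f x| * |cut R x| ≤ 1 * 1 :=
              mul_le_mul (hfb x) (cut_abs_le_one R x) (abs_nonneg _) zero_le_one
          _ = 1 := one_mul 1
      have hone_sub_b : ∀ x : EuclideanSpace ℝ (Fin d), |1 - cut R x| ≤ 1 := by
        intro x
        rw [abs_le]
        constructor
        · linarith [cut_le_one (d := d) R x]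
        · linarith [cut_nonneg (d := d) R x]
      have hffarb : ∀ x, |ffar x| ≤ 1 := by
        intro x
        rw [hffar]
        simp only [abs_mul]
        calc |f x| * |1 - cut R x| ≤ 1 * 1 :=
              mul_le_mul (hfb x) (hone_sub_b x) (abs_nonneg _) zero_le_one
          _ = 1 := one_mul 1
      have hfcutc : Continuous fcut := hfc.mul (cut_lip R).continuous
      have hffarc : Continuous ffar := hfc.mul (continuous_const.sub (cut_lip R).continuous)
      have hffarl : LipschitzWith 2 ffar := by
        have := lip_mul hfl (one_sub_cut_lip R) hfb hone_sub_b
        have h11 : (1 + 1 : ℝ≥0) = 2 := by norm_num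
        rwa [h11] at this
      have hffar0 : ∀ x : EuclideanSpace ℝ (Fin d), ‖x‖ ≤ R → ffar x = 0 := by
        intro x hx
        rw [hffar]
        simp only
        rw [cut_eq_one hx, sub_self, mul_zero]
      have hfarbd : |LL μ ν n ffar| ≤ ε/7 := hfar ffar hffarb hffarl hffar0
      have hsplit : LL μ ν n f = LL μ ν n fcut + LL μ ν n ffar := by
        unfold LL
        have hfeq : f = fun x => fcut x + ffar x := by
          funext x; rw [hfcut, hffar]; simp only; ring
        rw [hfeq, integral_add (integ _ hfcutc hfcutb) (integ _ hffarc hffarb),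
          integral_add (integ _ hfcutc hfcutb) (integ _ hffarc hffarb)]
        ring
      obtain ⟨h, hhV, happrox⟩ := hVnet f hfb hfl
      have hhb := (hVprop h hhV).1
      have hhl := (hVprop h hhV).2
      have hdiffb : ∀ x, |fcut x - h x| ≤ 2*(ε/7) := happrox
      have hdiffLL : |LL μ ν n fcut - LL μ ν n h| ≤ 4*(ε/7) := by
        have heq : LL μ ν n fcut - LL μ ν n h = LL μ ν n (fun x => fcut x - h x) := by
          unfold LL
          rw [integral_sub (integ _ hfcutc hfcutb) (integ _ hhl.continuous hhb),
            integral_sub (integ _ hfcutc hfcutb) (integ _ hhl.continuous hhb)]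
          ring
        rw [heq]
        unfold LL
        calc |(∫ x, (fcut x - h x) ∂(μ n)) - ∫ x, (fcut x - h x) ∂(ν n)|
            ≤ |∫ x, (fcut x - h x) ∂(μ n)| + |∫ x, (fcut x - h x) ∂(ν n)| := abs_sub _ _
          _ ≤ 2*(ε/7) + 2*(ε/7) :=
              add_le_add (abs_integral_le _ hdiffb) (abs_integral_le _ hdiffb)
          _ = 4*(ε/7) := by ring
      have hLLh : |LL μ ν n h| ≤ ε/7 := hVn h hhV
      have t1 : |LL μ ν n f| ≤ |LL μ ν n fcut| + |LL μ ν n ffar| := by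
        rw [hsplit]; exact abs_add_le _ _
      have t2 : |LL μ ν n fcut| - |LL μ ν n h| ≤ |LL μ ν n fcut - LL μ ν n h| :=
        abs_sub_abs_le_abs_sub _ _
      linarith
    have hnonneg : (0:ℝ) ≤ ⨆ f ∈ S, |∫ x, f x ∂(μ n) - ∫ x, f x ∂(ν n)| :=
      Real.iSup_nonneg (fun g => Real.iSup_nonneg (fun _ => abs_nonneg _))
    have hbound : (⨆ f ∈ S, |∫ x, f x ∂(μ n) - ∫ x, f x ∂(ν n)|) ≤ 6*(ε/7) := by
      apply Real.iSup_le _ (by positivity)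
      intro g
      apply Real.iSup_le _ (by positivity)
      intro hg
      exact hkey g hg
    rw [Real.dist_0_eq_abs, abs_of_nonneg hnonneg]
    calc (⨆ f ∈ S, |∫ x, f x ∂(μ n) - ∫ x, f x ∂(ν n)|) ≤ 6*(ε/7) := hbound
      _ < ε := by linarith
  · -- easy direction
    intro hsup f hfb hfl
    have hle : ∀ n, |∫ x, f x ∂(μ n) - ∫ x, f x ∂(ν n)| ≤
        ⨆ g ∈ S, |∫ x, g x ∂(μ n) - ∫ x, g x ∂(ν n)| := by
      intro n
      haveI := hμ n
      haveI := hν n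
      have hψ : ∀ g, (⨆ (_ : g ∈ S), |∫ x, g x ∂(μ n) - ∫ x, g x ∂(ν n)|) ≤ 2 := by
        intro g
        apply Real.iSup_le _ (by norm_num)
        intro hg
        calc |∫ x, g x ∂(μ n) - ∫ x, g x ∂(ν n)|
            ≤ |∫ x, g x ∂(μ n)| + |∫ x, g x ∂(ν n)| := abs_sub _ _
          _ ≤ 1 + 1 := add_le_add (abs_integral_le _ hg.1) (abs_integral_le _ hg.1)
          _ = 2 := by norm_num
      have hbdd : BddAbove (Set.range fun g =>
          ⨆ (_ : g ∈ S), |∫ x, g x ∂(μ n) - ∫ x, g x ∂(ν n)|) := by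
        refine ⟨2, ?_⟩
        rintro _ ⟨g, rfl⟩
        exact hψ g
      have h1 : |∫ x, f x ∂(μ n) - ∫ x, f x ∂(ν n)|
          = ⨆ (_ : f ∈ S), |∫ x, f x ∂(μ n) - ∫ x, f x ∂(ν n)| :=
        (ciSup_pos (f := fun _ => |∫ x, f x ∂(μ n) - ∫ x, f x ∂(ν n)|)
          (show f ∈ S from ⟨hfb, hfl⟩)).symm
      rw [h1]
      exact le_ciSup hbdd f
    exact squeeze_zero (fun n => abs_nonneg _) hle hsup
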